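/- Let α ≥ -1/2 and κ₁ ≥ 0. There exists a constant C depending only on α and κ₁ such that for every nonnegative nondecreasing function φ on [-1,1] one has ∫_{[-1,1]} φ(u) dΠ_{α+κ₁}(u) ≤ C ∫_{[-1,1]} φ(u) dΠ_α(u). -/

import Mathlib

open MeasureTheory Real Set

noncomputable section

/-- The Jacobi measure `μ_{α,β}^+` on `(0,π)`: density
`(sin(θ/2))^(2α+1) (cos(θ/2))^(2β+1)` w.r.t. Lebesgue measure on `(0,π)`. -/
def jacobiMeasure (α β : ℝ) : Measure ℝ :=
  (volume.restrict (Ioo 0 π)).withDensity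
    (fun θ => ENNReal.ofReal (Real.sin (θ / 2) ^ (2 * α + 1) * Real.cos (θ / 2) ^ (2 * β + 1)))

/-- The ball `B(θ,r) = (θ-r, θ+r) ∩ (0,π)`. -/
def jacobiBall (θ r : ℝ) : Set ℝ := Ioo (θ - r) (θ + r) ∩ Ioo 0 π

/-- The measure `Π_α` on `[-1,1]`. -/
def PiMeasure (α : ℝ) : Measure ℝ :=
  if α = -(1 / 2) then (2 : ENNReal)⁻¹ • (Measure.dirac (-1) + Measure.dirac 1)
  else
    (volume.restrict (Icc (-1) 1)).withDensity
      (fun u => ENNReal.ofReal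
        (Real.Gamma (α + 1) / (Real.sqrt π * Real.Gamma (α + 1 / 2)) * (1 - u ^ 2) ^ (α - 1 / 2)))

/-- `q(θ,φ,u,v) = 1 - u sin(θ/2) sin(φ/2) - v cos(θ/2) cos(φ/2)`. -/
def qfun (θ φ u v : ℝ) : ℝ :=
  1 - u * Real.sin (θ / 2) * Real.sin (φ / 2) - v * Real.cos (θ / 2) * Real.cos (φ / 2)

/-- `Ψ^{α,β}(t,s) = sinh(t/2) / (cosh(t/2) - 1 + s)^(α+β+2)`. -/
def Psi (α β t s : ℝ) : ℝ :=
  Real.sinh (t / 2) / (Real.cosh (t / 2) - 1 + s) ^ (α + β + 2)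

/-- The Jacobi-Poisson kernel `H_t^{α,β}(θ,φ)`. -/
def Hker (α β t θ φ : ℝ) : ℝ :=
  ((2 : ℝ) ^ (-(α + β + 2)) / (jacobiMeasure α β (Ioo 0 π)).toReal) * Real.sinh (t / 2) *
    ∫ u, ∫ v, 1 / (Real.cosh (t / 2) - 1 + qfun θ φ u v) ^ (α + β + 2)
      ∂(PiMeasure β) ∂(PiMeasure α)

/-- The symmetrized kernel `H̃_t^{α,β}(θ,φ) = (1/4) sin θ sin φ H_t^{α+1,β+1}(θ,φ)`. -/
def Htilde (α β t θ φ : ℝ) : ℝ :=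
  (1 / 4) * Real.sin θ * Real.sin φ * Hker (α + 1) (β + 1) t θ φ

end


private lemma integrableOn_one_sub_sq_rpow {r : ℝ} (hr : -1 < r) :
    IntegrableOn (fun u : ℝ => (1 - u ^ 2) ^ r) (Icc (-1 : ℝ) 1) volume := by
  have hmeas : Measurable fun u : ℝ => (1 - u ^ 2) ^ r :=
    ((measurable_const.sub ((measurable_id : Measurable fun u : ℝ => u).pow_const 2)).pow_const r)
  rcases le_or_gt 0 r with hr0 | hr0
  · -- bounded by 1
    refine Integrable.mono' (integrable_const 1) hmeas.aestronglyMeasurable ?_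
    filter_upwards [ae_restrict_mem measurableSet_Icc] with u hu
    rcases hu with ⟨h1, h2⟩
    have hbase0 : (0:ℝ) ≤ 1 - u ^ 2 := by nlinarith
    have hbase1 : 1 - u ^ 2 ≤ 1 := by nlinarith
    rw [Real.norm_eq_abs, abs_of_nonneg (Real.rpow_nonneg hbase0 r)]
    exact Real.rpow_le_one hbase0 hbase1 hr0
  · -- dominated by (1-u)^r + (1+u)^r
    have h1 : IntervalIntegrable (fun x : ℝ => x ^ r) volume 0 2 :=
      intervalIntegral.intervalIntegrable_rpow' hr
    have h2 : IntervalIntegrable (fun x : ℝ => (1 - x) ^ r) volume (-1) 1 := by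
      have h := (h1.comp_sub_left 1).symm
      norm_num at h
      exact h
    have h3 : IntervalIntegrable (fun x : ℝ => (1 + x) ^ r) volume (-1) 1 := by
      have h := h1.comp_add_left 1
      norm_num at h
      exact h
    have hint : IntegrableOn (fun u : ℝ => (1 - u) ^ r + (1 + u) ^ r)
        (Icc (-1 : ℝ) 1) volume := by
      have := (h2.add h3)
      rwa [intervalIntegrable_iff_integrableOn_Icc_of_le (by norm_num)] at this
    refine Integrable.mono' hint hmeas.aestronglyMeasurable ?_
    filter_upwards [ae_restrict_mem measurableSet_Icc] with u hu
    rcases hu with ⟨ha, hb⟩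
    have hA : (0:ℝ) ≤ 1 - u := by linarith
    have hB : (0:ℝ) ≤ 1 + u := by linarith
    have hbase0 : (0:ℝ) ≤ 1 - u ^ 2 := by nlinarith
    rw [Real.norm_eq_abs, abs_of_nonneg (Real.rpow_nonneg hbase0 r)]
    rcases eq_or_lt_of_le hbase0 with heq | hpos
    · rw [← heq, Real.zero_rpow (by linarith : r ≠ 0)]
      exact add_nonneg (Real.rpow_nonneg hA r) (Real.rpow_nonneg hB r)
    · rcases le_or_gt 0 u with hu0 | hu0
      · have hlt : (0:ℝ) < 1 - u := by nlinarith
        have : (1 - u ^ 2) ^ r ≤ (1 - u) ^ r := by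
          apply Real.rpow_le_rpow_of_nonpos hlt (by nlinarith) hr0.le
        have h4 : (0:ℝ) ≤ (1 + u) ^ r := Real.rpow_nonneg hB r
        linarith
      · have hlt : (0:ℝ) < 1 + u := by nlinarith
        have : (1 - u ^ 2) ^ r ≤ (1 + u) ^ r := by
          apply Real.rpow_le_rpow_of_nonpos hlt (by nlinarith) hr0.le
        have h4 : (0:ℝ) ≤ (1 - u) ^ r := Real.rpow_nonneg hA r
        linarith

private lemma piMeasure_univ_lt_top {a : ℝ} (ha : -(1/2) < a) :
    PiMeasure a univ < ⊤ := by
  have hne : a ≠ -(1/2) := ne_of_gt ha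
  have hmeas : Measurable fun u : ℝ => ENNReal.ofReal
      (Real.Gamma (a + 1) / (Real.sqrt π * Real.Gamma (a + 1 / 2)) * (1 - u ^ 2) ^ (a - 1 / 2)) :=
    (measurable_const.mul (((measurable_const.sub
      ((measurable_id : Measurable fun u : ℝ => u).pow_const 2)).pow_const _))).ennreal_ofReal
  rw [PiMeasure, if_neg hne, withDensity_apply _ MeasurableSet.univ, Measure.restrict_univ]
  have hint : IntegrableOn (fun u : ℝ =>
      Real.Gamma (a + 1) / (Real.sqrt π * Real.Gamma (a + 1 / 2)) * (1 - u ^ 2) ^ (a - 1 / 2))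
      (Icc (-1 : ℝ) 1) volume :=
    (integrableOn_one_sub_sq_rpow (by linarith)).const_mul _
  exact hint.setLIntegral_lt_top

/-- integrals of nonnegative nondecreasing functions against `Π_{α+κ₁}`
are controlled by integrals against `Π_α`. -/
theorem PiMeasure_monotone_integral_comparison (α κ₁ : ℝ)
    (hα : -(1 / 2) ≤ α) (hκ₁ : 0 ≤ κ₁) :
    ∃ C : ℝ, 0 < C ∧
      ∀ φ : ℝ → ℝ, (∀ u ∈ Icc (-1 : ℝ) 1, 0 ≤ φ u) → MonotoneOn φ (Icc (-1 : ℝ) 1) →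
        (∫⁻ u, ENNReal.ofReal (φ u) ∂(PiMeasure (α + κ₁)))
          ≤ ENNReal.ofReal C * ∫⁻ u, ENNReal.ofReal (φ u) ∂(PiMeasure α) := by
  rcases eq_or_lt_of_le hκ₁ with hk0 | hk0
  · refine ⟨1, one_pos, fun φ _ _ => ?_⟩
    rw [← hk0, add_zero]
    simp
  by_cases hα2 : α = -(1/2)
  · -- Dirac case
    subst hα2
    set a : ℝ := -(1/2) + κ₁ with ha_def
    have ha : -(1/2) < a := by simp only [ha_def]; linarith
    have hane : a ≠ -(1/2) := ne_of_gt ha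
    have hM : PiMeasure a univ < ⊤ := piMeasure_univ_lt_top ha
    set M := PiMeasure a univ with hM_def
    refine ⟨2 * M.toReal + 1, by positivity, fun φ hφ0 hφmono => ?_⟩
    have h1mem : (1:ℝ) ∈ Icc (-1:ℝ) 1 := by norm_num
    -- RHS measure computation
    have hrhs : (∫⁻ u, ENNReal.ofReal (φ u) ∂(PiMeasure (-(1/2)))) =
        2⁻¹ * (ENNReal.ofReal (φ (-1)) + ENNReal.ofReal (φ 1)) := by
      rw [PiMeasure, if_pos rfl, lintegral_smul_measure, lintegral_add_measure,
        lintegral_dirac, lintegral_dirac, smul_eq_mul]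
    -- LHS bound
    have hdmeas : Measurable fun u : ℝ => ENNReal.ofReal
        (Real.Gamma (a + 1) / (Real.sqrt π * Real.Gamma (a + 1 / 2)) * (1 - u ^ 2) ^ (a - 1 / 2)) :=
      (measurable_const.mul (((measurable_const.sub
        ((measurable_id : Measurable fun u : ℝ => u).pow_const 2)).pow_const _))).ennreal_ofReal
    have hlhs : (∫⁻ u, ENNReal.ofReal (φ u) ∂(PiMeasure a)) ≤ ENNReal.ofReal (φ 1) * M := by
      have hac : PiMeasure a ≪ volume.restrict (Icc (-1:ℝ) 1) := by
        rw [PiMeasure, if_neg hane]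
        exact withDensity_absolutelyContinuous _ _
      have hmem : ∀ᵐ u ∂(PiMeasure a), u ∈ Icc (-1:ℝ) 1 :=
        hac.ae_le (ae_restrict_mem measurableSet_Icc)
      calc (∫⁻ u, ENNReal.ofReal (φ u) ∂(PiMeasure a))
          ≤ ∫⁻ _, ENNReal.ofReal (φ 1) ∂(PiMeasure a) := by
            refine lintegral_mono_ae ?_
            filter_upwards [hmem] with u hu
            exact ENNReal.ofReal_le_ofReal (hφmono hu h1mem hu.2)
        _ = ENNReal.ofReal (φ 1) * M := by rw [lintegral_const, hM_def]
    rw [hrhs]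
    refine hlhs.trans ?_
    have hkey : M ≤ ENNReal.ofReal (2 * M.toReal + 1) * 2⁻¹ := by
      have h1 : ENNReal.ofReal (2 * M.toReal) ≤ ENNReal.ofReal (2 * M.toReal + 1) :=
        ENNReal.ofReal_le_ofReal (by linarith)
      have h2 : ENNReal.ofReal (2 * M.toReal) = 2 * M := by
        rw [ENNReal.ofReal_mul (by norm_num), ENNReal.ofReal_toReal hM.ne]
        norm_num
      calc M = 2 * M * 2⁻¹ := by
              rw [mul_comm 2 M, mul_assoc, ENNReal.mul_inv_cancel (by norm_num) (by norm_num),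
                mul_one]
        _ ≤ ENNReal.ofReal (2 * M.toReal + 1) * 2⁻¹ := by
              rw [← h2]; exact mul_le_mul_left h1 _
    calc ENNReal.ofReal (φ 1) * M
        ≤ ENNReal.ofReal (φ 1) * (ENNReal.ofReal (2 * M.toReal + 1) * 2⁻¹) :=
          mul_le_mul_right hkey _
      _ ≤ ENNReal.ofReal (2 * M.toReal + 1) *
          (2⁻¹ * (ENNReal.ofReal (φ (-1)) + ENNReal.ofReal (φ 1))) := by
          rw [← mul_assoc, mul_comm (ENNReal.ofReal (φ 1)), mul_assoc]
          refine mul_le_mul_right ?_ _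
          rw [mul_comm]
          exact mul_le_mul_right le_add_self _
  · -- absolutely continuous case
    have hαpos : -(1/2) < α := lt_of_le_of_ne hα (Ne.symm hα2)
    have hane : α + κ₁ ≠ -(1/2) := by intro h; linarith
    set c' : ℝ := Real.Gamma (α + 1) / (Real.sqrt π * Real.Gamma (α + 1 / 2)) with hc'_def
    set c : ℝ := Real.Gamma (α + κ₁ + 1) / (Real.sqrt π * Real.Gamma (α + κ₁ + 1 / 2)) with hc_def
    have hc'pos : 0 < c' := by
      apply div_pos (Real.Gamma_pos_of_pos (by linarith))
      exact mul_pos (Real.sqrt_pos.mpr Real.pi_pos) (Real.Gamma_pos_of_pos (by linarith))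
    have hcpos : 0 < c := by
      apply div_pos (Real.Gamma_pos_of_pos (by linarith))
      exact mul_pos (Real.sqrt_pos.mpr Real.pi_pos) (Real.Gamma_pos_of_pos (by linarith))
    set C : ℝ := max (c / c') 1 with hC_def
    have hCpos : (0:ℝ) < C := lt_of_lt_of_le one_pos (le_max_right _ _)
    have hCc' : c ≤ C * c' := by
      have h1 : c / c' ≤ C := le_max_left _ _
      calc c = (c / c') * c' := by field_simp
        _ ≤ C * c' := mul_le_mul_of_nonneg_right h1 hc'pos.le
    refine ⟨C, hCpos, fun φ hφ0 hφmono => ?_⟩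
    have hg2meas : Measurable fun u : ℝ => ENNReal.ofReal (c' * (1 - u ^ 2) ^ (α - 1 / 2)) :=
      (measurable_const.mul (((measurable_const.sub
        ((measurable_id : Measurable fun u : ℝ => u).pow_const 2)).pow_const _))).ennreal_ofReal
    have hle : PiMeasure (α + κ₁) ≤ ENNReal.ofReal C • PiMeasure α := by
      rw [PiMeasure, PiMeasure, if_neg hane, if_neg hα2, ← hc'_def, ← hc_def,
        ← withDensity_smul _ hg2meas]
      refine withDensity_mono ?_
      have hnull : (volume : Measure ℝ) ({-1, 1} : Set ℝ) = 0 :=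
        (Set.toFinite ({-1, 1} : Set ℝ)).measure_zero _
      have hae : ∀ᵐ (u : ℝ) ∂(volume.restrict (Icc (-1:ℝ) 1)), u ∉ ({-1, 1} : Set ℝ) :=
        ae_restrict_of_ae (measure_eq_zero_iff_ae_notMem.mp hnull)
      filter_upwards [hae, ae_restrict_mem measurableSet_Icc] with u hu hmem
      simp only [Pi.smul_apply, smul_eq_mul]
      rw [← ENNReal.ofReal_mul hCpos.le]
      apply ENNReal.ofReal_le_ofReal
      have hu1 : u ≠ -1 ∧ u ≠ 1 := by
        constructor <;> intro h <;> exact hu (by simp [h])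
      have hx : (0:ℝ) < 1 - u ^ 2 := by
        rcases hmem with ⟨h1, h2⟩
        rcases lt_or_eq_of_le h1 with h1 | h1
        · rcases lt_or_eq_of_le h2 with h2 | h2
          · nlinarith
          · exact absurd h2 hu1.2
        · exact absurd h1.symm hu1.1
      have hx1 : 1 - u ^ 2 ≤ 1 := by nlinarith
      have hsplit : (1 - u ^ 2) ^ (α + κ₁ - 1 / 2) =
          (1 - u ^ 2) ^ κ₁ * (1 - u ^ 2) ^ (α - 1 / 2) := by
        rw [← Real.rpow_add hx]; ring_nf
      rw [hsplit]
      have hk1 : (1 - u ^ 2) ^ κ₁ ≤ 1 := Real.rpow_le_one hx.le hx1 hκ₁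
      have hk2 : (0:ℝ) ≤ (1 - u ^ 2) ^ κ₁ := Real.rpow_nonneg hx.le _
      have hk3 : (0:ℝ) ≤ (1 - u ^ 2) ^ (α - 1 / 2) := Real.rpow_nonneg hx.le _
      calc c * ((1 - u ^ 2) ^ κ₁ * (1 - u ^ 2) ^ (α - 1 / 2))
          ≤ c * (1 * (1 - u ^ 2) ^ (α - 1 / 2)) := by
            apply mul_le_mul_of_nonneg_left _ hcpos.le
            exact mul_le_mul_of_nonneg_right hk1 hk3
        _ = c * (1 - u ^ 2) ^ (α - 1 / 2) := by ring
        _ ≤ (C * c') * (1 - u ^ 2) ^ (α - 1 / 2) := mul_le_mul_of_nonneg_right hCc' hk3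
        _ = C * (c' * (1 - u ^ 2) ^ (α - 1 / 2)) := by ring
    calc (∫⁻ u, ENNReal.ofReal (φ u) ∂(PiMeasure (α + κ₁)))
        ≤ ∫⁻ u, ENNReal.ofReal (φ u) ∂(ENNReal.ofReal C • PiMeasure α) :=
          lintegral_mono' hle le_rfl
      _ = ENNReal.ofReal C * ∫⁻ u, ENNReal.ofReal (φ u) ∂(PiMeasure α) :=
          lintegral_smul_measure _ _
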